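/- arXiv:1007.2833 — 3 statements merged into one kernel-verified Lean document; each statement's English description precedes it below -/
import Mathlib

section
/- Let X be a nonnegative, extended-real-valued, increasing, right-continuous, progressively measurable process, M > 0, σ_M = inf{ r ≥ 0 : X(r) ≥ M }, and let τ be a stopping time. Then for every t > 0, P( σ_M < t ) ≤ (1/M) · E[ X( σ_M ∧ τ ∧ t ) ] + P( τ < t ). -/
open MeasureTheory Filter Set
open scoped NNReal ENNReal Topology

/-- The hitting time `σ_M(ω) = inf { r ≥ 0 : X(r,ω) ≥ M }`, valued in `[0,∞]`
(with `inf ∅ = ∞`). -/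
noncomputable def hitTime {Ω : Type*} (X : ℝ≥0 → Ω → ℝ≥0∞) (M : ℝ≥0) (ω : Ω) : ℝ≥0∞ :=
  sInf ((fun r : ℝ≥0 => (r : ℝ≥0∞)) '' {r : ℝ≥0 | (M : ℝ≥0∞) ≤ X r ω})

lemma hitTime_le {Ω : Type*} {X : ℝ≥0 → Ω → ℝ≥0∞} {M : ℝ≥0} {ω : Ω} {r : ℝ≥0}
    (h : (M : ℝ≥0∞) ≤ X r ω) : hitTime X M ω ≤ (r : ℝ≥0∞) :=
  sInf_le ⟨r, h, rfl⟩

/-- key claim: at a finite hitting time the process is ≥ M -/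
lemma hitTime_spec {Ω : Type*} {X : ℝ≥0 → Ω → ℝ≥0∞} {M : ℝ≥0} {ω : Ω}
    (hmono : Monotone fun t => X t ω)
    (hrc : ∀ t, ContinuousWithinAt (fun s => X s ω) (Ici t) t)
    (hfin : hitTime X M ω ≠ ⊤) :
    (M : ℝ≥0∞) ≤ X ((hitTime X M ω).toNNReal) ω := by
  set s₀ : ℝ≥0 := (hitTime X M ω).toNNReal with hs₀
  have hcoe : hitTime X M ω = (s₀ : ℝ≥0∞) := (ENNReal.coe_toNNReal hfin).symm
  have hgt : ∀ s : ℝ≥0, s₀ < s → (M : ℝ≥0∞) ≤ X s ω := by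
    intro s hs
    have : hitTime X M ω < (s : ℝ≥0∞) := by rw [hcoe]; exact_mod_cast hs
    obtain ⟨a, ⟨r, hr, rfl⟩, hlt⟩ := sInf_lt_iff.mp this
    exact hr.trans (hmono (le_of_lt (ENNReal.coe_lt_coe.mp (by simpa using hlt))))
  have htend : Tendsto (fun s => X s ω) (𝓝[>] s₀) (𝓝 (X s₀ ω)) :=
    (hrc s₀).mono_left (nhdsWithin_mono _ Ioi_subset_Ici_self)
  have := ge_of_tendsto htend (eventually_nhdsWithin_of_forall (fun s hs => hgt s hs))
  rwa [hs₀]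

lemma measurable_hitTime {Ω : Type*} {m : MeasurableSpace Ω} {X : ℝ≥0 → Ω → ℝ≥0∞} {M : ℝ≥0}
    (hmono : ∀ ω, Monotone fun t => X t ω) (hX : ∀ r, Measurable (X r)) :
    Measurable (hitTime X M) := by
  apply measurable_of_Iio
  intro c
  have : hitTime X M ⁻¹' Iio c =
      ⋃ (q : ℚ) (_ : 0 ≤ q ∧ ((Real.toNNReal q : ℝ≥0∞) < c)),
        {ω | (M : ℝ≥0∞) ≤ X (Real.toNNReal q) ω} := by
    ext ω
    simp only [mem_preimage, mem_Iio, mem_iUnion, mem_setOf_eq]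
    constructor
    · intro h
      obtain ⟨a, ⟨r, hr, rfl⟩, hlt⟩ := sInf_lt_iff.mp h
      have hle : ∀ q : ℚ, r ≤ Real.toNNReal q → (M : ℝ≥0∞) ≤ X (Real.toNNReal q) ω :=
        fun q hq => hr.trans (hmono ω hq)
      rcases eq_or_ne c ⊤ with rfl | hc
      · refine ⟨⌈(r : ℝ)⌉₊, ⟨by positivity, ENNReal.coe_lt_top⟩, hle _ ?_⟩
        calc r = Real.toNNReal (r : ℝ) := (Real.toNNReal_coe).symm
          _ ≤ _ := Real.toNNReal_mono (by exact_mod_cast Nat.le_ceil (r : ℝ))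
      · have h1 : (r : ℝ≥0∞) < ((c.toNNReal : ℝ≥0∞)) := by
          rw [ENNReal.coe_toNNReal hc]; simpa using hlt
        have h2 : (r : ℝ) < (c.toNNReal : ℝ) := by exact_mod_cast ENNReal.coe_lt_coe.mp h1
        obtain ⟨q, hq1, hq2⟩ := exists_rat_btwn h2
        have hq0 : (0 : ℝ) ≤ q := le_trans r.coe_nonneg hq1.le
        refine ⟨q, ⟨by exact_mod_cast hq0, ?_⟩, hle _ ?_⟩
        · have h3 : Real.toNNReal q < Real.toNNReal (c.toNNReal : ℝ) :=
            (Real.toNNReal_lt_toNNReal_iff_of_nonneg hq0).mpr hq2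
          rw [Real.toNNReal_coe] at h3
          rw [← ENNReal.coe_toNNReal hc]
          exact_mod_cast h3
        · calc r = Real.toNNReal (r : ℝ) := (Real.toNNReal_coe).symm
            _ ≤ _ := Real.toNNReal_mono hq1.le
    · rintro ⟨q, ⟨hq0, hqc⟩, hXq⟩
      exact lt_of_le_of_lt (sInf_le ⟨_, hXq, rfl⟩) hqc
  rw [this]
  exact MeasurableSet.iUnion fun q => MeasurableSet.iUnion fun _ => measurableSet_le measurable_const (hX _)

lemma measurable_stopped' {Ω : Type*} {m : MeasurableSpace Ω} {F : Filtration ℝ≥0 m}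
    {X : ℝ≥0 → Ω → ℝ≥0∞} (hprog : ProgMeasurable F X) {g : Ω → ℝ≥0} (hg : Measurable g)
    {t : ℝ≥0} (hgt : ∀ ω, g ω ≤ t) : Measurable fun ω => X (g ω) ω := by
  have h1 : Measurable[Subtype.instMeasurableSpace.prod (F t)]
      fun p : Set.Iic t × Ω => X p.1 p.2 := (hprog t).measurable
  have h2 : @Measurable Ω (Set.Iic t × Ω) m (Subtype.instMeasurableSpace.prod (F t))
      fun ω => ((⟨g ω, hgt ω⟩ : Set.Iic t), ω) :=
    Measurable.prodMk (hg.subtype_mk) (measurable_id'' (F.le t))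
  exact h1.comp h2

theorem stmt2 {Ω : Type*} {m : MeasurableSpace Ω} (P : Measure Ω) [IsProbabilityMeasure P]
    (F : Filtration ℝ≥0 m) (X : ℝ≥0 → Ω → ℝ≥0∞)
    (hmono : ∀ ω, Monotone fun t => X t ω)
    (hrc : ∀ ω t, ContinuousWithinAt (fun s => X s ω) (Ici t) t)
    (hprog : ProgMeasurable F X)
    (M : ℝ≥0) (hM : 0 < M)
    (τ : Ω → ℝ≥0) (hτ : IsStoppingTime F (fun ω => (τ ω : WithTop ℝ≥0)))
    (t : ℝ≥0) (ht : 0 < t) :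
    P {ω | hitTime X M ω < (t : ℝ≥0∞)} ≤
      (M : ℝ≥0∞)⁻¹ *
          ∫⁻ ω, X ((hitTime X M ω ⊓ (τ ω : ℝ≥0∞) ⊓ (t : ℝ≥0∞)).toNNReal) ω ∂P
        + P {ω | τ ω < t} := by
  set f : Ω → ℝ≥0∞ :=
    fun ω => X ((hitTime X M ω ⊓ (τ ω : ℝ≥0∞) ⊓ (t : ℝ≥0∞)).toNNReal) ω with hf
  have hXr : ∀ r, Measurable (X r) := fun r =>
    ((IsStronglyProgressive.stronglyAdapted hprog r).mono (F.le r)).measurable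
  have hσ : Measurable (hitTime X M) := measurable_hitTime hmono hXr
  have hτm : Measurable τ := measurable_of_Iic fun a => by
    have h := F.le a _ (hτ a)
    simp only [WithTop.coe_le_coe] at h
    exact h
  have hg : Measurable fun ω => (hitTime X M ω ⊓ (τ ω : ℝ≥0∞) ⊓ (t : ℝ≥0∞)).toNNReal :=
    (((hσ.min (measurable_coe_nnreal_ennreal.comp hτm)).min measurable_const)).ennreal_toNNReal
  have hgt : ∀ ω, (hitTime X M ω ⊓ (τ ω : ℝ≥0∞) ⊓ (t : ℝ≥0∞)).toNNReal ≤ t := fun ω => by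
    simpa using ENNReal.toNNReal_mono ENNReal.coe_ne_top (min_le_right _ ((t : ℝ≥0∞)))
  have hfm : Measurable f := measurable_stopped' hprog hg hgt
  have hsub : {ω | hitTime X M ω < (t : ℝ≥0∞)} ⊆
      {ω | (M : ℝ≥0∞) ≤ f ω} ∪ {ω | τ ω < t} := by
    intro ω hω
    by_cases hc : τ ω < t
    · exact Or.inr hc
    · push_neg at hc
      left
      have hω' : hitTime X M ω < (t : ℝ≥0∞) := hω
      have hστ : hitTime X M ω ≤ (τ ω : ℝ≥0∞) :=
        le_of_lt (lt_of_lt_of_le hω' (by exact_mod_cast hc))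
      have h1 : hitTime X M ω ⊓ (τ ω : ℝ≥0∞) ⊓ (t : ℝ≥0∞) = hitTime X M ω := by
        rw [min_eq_left hστ, min_eq_left hω'.le]
      have hfin : hitTime X M ω ≠ ⊤ := (lt_of_lt_of_le hω' le_top).ne
      show (M : ℝ≥0∞) ≤ f ω
      rw [hf]
      simp only [h1]
      exact hitTime_spec (hmono ω) (hrc ω) hfin
  have hM0 : (M : ℝ≥0∞) ≠ 0 := by exact_mod_cast hM.ne'
  have hmar : (M : ℝ≥0∞) * P {ω | (M : ℝ≥0∞) ≤ f ω} ≤ ∫⁻ ω, f ω ∂P :=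
    mul_meas_ge_le_lintegral₀ hfm.aemeasurable _
  have hmarkov : P {ω | (M : ℝ≥0∞) ≤ f ω} ≤ (M : ℝ≥0∞)⁻¹ * ∫⁻ ω, f ω ∂P := by
    rw [← ENNReal.div_eq_inv_mul]
    exact (ENNReal.le_div_iff_mul_le (Or.inl hM0) (Or.inl ENNReal.coe_ne_top)).mpr
      (by rwa [mul_comm])
  calc P {ω | hitTime X M ω < (t : ℝ≥0∞)}
      ≤ P ({ω | (M : ℝ≥0∞) ≤ f ω} ∪ {ω | τ ω < t}) := measure_mono hsub
    _ ≤ P {ω | (M : ℝ≥0∞) ≤ f ω} + P {ω | τ ω < t} := measure_union_le _ _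
    _ ≤ (M : ℝ≥0∞)⁻¹ * (∫⁻ ω, f ω ∂P) + P {ω | τ ω < t} := add_le_add_left hmarkov _
end

section
/- There exists a constant c > 0, depending only on L and h, such that for all u, φ, ψ of class C¹ on M̄ that vanish on the lateral boundary Γ_l = {0,L} × [−h,0] and on the bottom Γ_b = [0,L] × {−h}, and such that additionally ∫_{−h}^0 u(x,z) dz = 0 for all x, one has | ∫_M ( u ∂_x φ + w(u) ∂_z φ ) ψ dM | ≤ c ‖u‖_{H¹} ‖φ‖_{H¹} |ψ|^{1/2} ‖ψ‖_{H¹}^{1/2}. -/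
open MeasureTheory Set intervalIntegral

/-- Partial derivative in the first (horizontal, `x`) variable. -/
noncomputable def pdx (f : ℝ × ℝ → ℝ) (p : ℝ × ℝ) : ℝ := fderiv ℝ f p (1, 0)

/-- Partial derivative in the second (vertical, `z`) variable. -/
noncomputable def pdz (f : ℝ × ℝ → ℝ) (p : ℝ × ℝ) : ℝ := fderiv ℝ f p (0, 1)

/-- The diagnostic vertical velocity `w(u)(x,z) = ∫_z^0 ∂ₓ u(x,s) ds`. -/
noncomputable def wOp (u : ℝ × ℝ → ℝ) (p : ℝ × ℝ) : ℝ := ∫ s in p.2..0, pdx u (p.1, s)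

/-- The open domain `M = (0,L) × (-h,0)`. -/
def dom (L h : ℝ) : Set (ℝ × ℝ) := Ioo 0 L ×ˢ Ioo (-h) 0

/-- The closed domain `M̄ = [0,L] × [-h,0]`. -/
def cdom (L h : ℝ) : Set (ℝ × ℝ) := Icc 0 L ×ˢ Icc (-h) 0

/-- The `L²(M)` norm. -/
noncomputable def l2 (L h : ℝ) (f : ℝ × ℝ → ℝ) : ℝ :=
  Real.sqrt (∫ p in dom L h, f p ^ 2)

/-- The `H¹(M)` norm. -/
noncomputable def h1n (L h : ℝ) (f : ℝ × ℝ → ℝ) : ℝ :=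
  Real.sqrt (l2 L h f ^ 2 + l2 L h (pdx f) ^ 2 + l2 L h (pdz f) ^ 2)

/-- The `H²(M)` norm. -/
noncomputable def h2n (L h : ℝ) (f : ℝ × ℝ → ℝ) : ℝ :=
  Real.sqrt (h1n L h f ^ 2 + l2 L h (pdx (pdx f)) ^ 2 + l2 L h (pdx (pdz f)) ^ 2
    + l2 L h (pdz (pdz f)) ^ 2)


-- Cauchy-Schwarz for integrals
lemma myCS {α : Type*} [MeasurableSpace α] (μ : Measure α) (f g : α → ℝ)
    (hf : MemLp f 2 μ) (hg : MemLp g 2 μ) :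
    ∫ a, |f a| * |g a| ∂μ ≤ Real.sqrt (∫ a, f a ^ 2 ∂μ) * Real.sqrt (∫ a, g a ^ 2 ∂μ) := by
  have hpq : Real.HolderConjugate 2 2 := ⟨by norm_num, by norm_num, by norm_num⟩
  have h2 : ENNReal.ofReal (2:ℝ) = 2 := by norm_num
  have := MeasureTheory.integral_mul_norm_le_Lp_mul_Lq hpq (by rw [h2]; exact hf)
    (by rw [h2]; exact hg)
  simp only [Real.norm_eq_abs] at this
  calc ∫ a, |f a| * |g a| ∂μ
      ≤ (∫ a, |f a| ^ (2:ℝ) ∂μ) ^ (1/(2:ℝ)) * (∫ a, |g a| ^ (2:ℝ) ∂μ) ^ (1/(2:ℝ)) := this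
    _ = Real.sqrt (∫ a, f a ^ 2 ∂μ) * Real.sqrt (∫ a, g a ^ 2 ∂μ) := by
        rw [Real.sqrt_eq_rpow, Real.sqrt_eq_rpow]
        congr 2 <;> refine integral_congr_ae (Filter.Eventually.of_forall fun a => ?_) <;>
          simp [Real.rpow_two, sq_abs]

-- integrability on dom
lemma intOnDom (L h : ℝ) {f : ℝ × ℝ → ℝ} (hf : Continuous f) : IntegrableOn f (dom L h) :=
  ((hf.continuousOn).integrableOn_compact (isCompact_Icc.prod isCompact_Icc)).mono_set
    (Set.prod_mono Set.Ioo_subset_Icc_self Set.Ioo_subset_Icc_self)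

lemma intOnIoo {a b : ℝ} {f : ℝ → ℝ} (hf : Continuous f) : IntegrableOn f (Ioo a b) :=
  (hf.integrableOn_Icc).mono_set Set.Ioo_subset_Icc_self

lemma mem2Dom (L h : ℝ) {f : ℝ × ℝ → ℝ} (hf : Continuous f) :
    MemLp f 2 (volume.restrict (dom L h)) :=
  (memLp_two_iff_integrable_sq (hf.aestronglyMeasurable.restrict)).mpr
    (intOnDom L h (by fun_prop))

lemma mem2Ioo {a b : ℝ} {f : ℝ → ℝ} (hf : Continuous f) :
    MemLp f 2 (volume.restrict (Ioo a b)) :=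
  (memLp_two_iff_integrable_sq (hf.aestronglyMeasurable.restrict)).mpr
    (intOnIoo (by fun_prop))

-- Fubini on dom
lemma fub (L h : ℝ) {f : ℝ × ℝ → ℝ} (hf : IntegrableOn f (dom L h)) :
    ∫ p in dom L h, f p = ∫ x in Ioo 0 L, ∫ z in Ioo (-h) 0, f (x, z) := by
  unfold dom at hf ⊢
  rw [MeasureTheory.Measure.volume_eq_prod] at hf ⊢
  exact MeasureTheory.setIntegral_prod f hf

lemma fubSwap (L h : ℝ) {f : ℝ × ℝ → ℝ} (hf : IntegrableOn f (dom L h)) :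
    ∫ p in dom L h, f p = ∫ z in Ioo (-h) 0, ∫ x in Ioo 0 L, f (x, z) := by
  rw [fub L h hf]
  unfold dom at hf
  have : IntegrableOn f (Ioo 0 L ×ˢ Ioo (-h) 0) (volume.prod volume) := by
    rw [← MeasureTheory.Measure.volume_eq_prod]; exact hf
  rw [IntegrableOn, ← Measure.prod_restrict] at this
  exact MeasureTheory.integral_integral_swap (f := fun x z => f (x, z)) this

-- partial derivatives as 1D derivatives
lemma hderivX {f : ℝ × ℝ → ℝ} (hf : ContDiff ℝ 1 f) (z x : ℝ) :
    HasDerivAt (fun t => f (t, z)) (pdx f (x, z)) x := by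
  have hF : HasFDerivAt f (fderiv ℝ f (x, z)) (x, z) :=
    (hf.differentiable (by norm_num) (x, z)).hasFDerivAt
  have hline : HasDerivAt (fun t : ℝ => (t, z)) ((1:ℝ), (0:ℝ)) x := by
    simpa using (hasDerivAt_id x).prodMk (hasDerivAt_const x z)
  exact hF.comp_hasDerivAt x hline

lemma hderivZ {f : ℝ × ℝ → ℝ} (hf : ContDiff ℝ 1 f) (x z : ℝ) :
    HasDerivAt (fun t => f (x, t)) (pdz f (x, z)) z := by
  have hF : HasFDerivAt f (fderiv ℝ f (x, z)) (x, z) :=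
    (hf.differentiable (by norm_num) (x, z)).hasFDerivAt
  have hline : HasDerivAt (fun t : ℝ => (x, t)) ((0:ℝ), (1:ℝ)) z := by
    simpa using (hasDerivAt_const z x).prodMk (hasDerivAt_id z)
  exact hF.comp_hasDerivAt z hline

lemma contPdx {f : ℝ × ℝ → ℝ} (hf : ContDiff ℝ 1 f) : Continuous (pdx f) :=
  (hf.continuous_fderiv (by norm_num)).clm_apply continuous_const

lemma contPdz {f : ℝ × ℝ → ℝ} (hf : ContDiff ℝ 1 f) : Continuous (pdz f) :=
  (hf.continuous_fderiv (by norm_num)).clm_apply continuous_const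

-- FTC square bound
lemma sqBound {g g' : ℝ → ℝ} (hd : ∀ t, HasDerivAt g (g' t) t) (hcg : Continuous g)
    (hc : Continuous g') {a b x : ℝ} (ha : g a = 0) (hx : x ∈ Icc a b) :
    g x ^ 2 ≤ ∫ t in Ioo a b, 2 * (|g t| * |g' t|) := by
  have hax : a ≤ x := hx.1
  have hxb : x ≤ b := hx.2
  have h1 : ∀ t ∈ uIcc a x, HasDerivAt (fun s => g s ^ 2) (2 * g t * g' t) t := by
    intro t _
    simpa using (hd t).fun_pow 2
  have h2 : IntervalIntegrable (fun t => 2 * g t * g' t) volume a x :=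
    (by fun_prop : Continuous fun t => 2 * g t * g' t).intervalIntegrable a x
  have h3 : ∫ t in a..x, 2 * g t * g' t = g x ^ 2 - g a ^ 2 :=
    integral_eq_sub_of_hasDerivAt h1 h2
  have h4 : g x ^ 2 = ∫ t in a..x, 2 * g t * g' t := by rw [h3, ha]; ring
  have h5 : ∫ t in a..x, 2 * g t * g' t ≤ ∫ t in a..x, 2 * (|g t| * |g' t|) := by
    apply intervalIntegral.integral_mono_on hax h2
      ((by fun_prop : Continuous fun t => 2 * (|g t| * |g' t|)).intervalIntegrable a x)
    intro t _
    calc 2 * g t * g' t ≤ |2 * g t * g' t| := le_abs_self _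
      _ = 2 * (|g t| * |g' t|) := by rw [abs_mul, abs_mul]; simp [abs_of_nonneg]; ring
  have h6 : ∫ t in a..x, 2 * (|g t| * |g' t|) ≤ ∫ t in a..b, 2 * (|g t| * |g' t|) := by
    apply intervalIntegral.integral_mono_interval le_rfl hax hxb
    · filter_upwards with t
      positivity
    · exact (by fun_prop : Continuous fun t => 2 * (|g t| * |g' t|)).intervalIntegrable a b
  calc g x ^ 2 = ∫ t in a..x, 2 * g t * g' t := h4
    _ ≤ ∫ t in a..x, 2 * (|g t| * |g' t|) := h5
    _ ≤ ∫ t in a..b, 2 * (|g t| * |g' t|) := h6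
    _ = ∫ t in Ioo a b, 2 * (|g t| * |g' t|) := by
        rw [intervalIntegral.integral_of_le (hax.trans hxb),
          MeasureTheory.integral_Ioc_eq_integral_Ioo]

-- continuity of wOp
lemma contW {u : ℝ × ℝ → ℝ} (hu : ContDiff ℝ 1 u) : Continuous (wOp u) := by
  have hc : Continuous fun q : (ℝ × ℝ) × ℝ => pdx u (q.1.1, q.2) := by
    exact (contPdx hu).comp (by fun_prop)
  have h1 : Continuous fun p : ℝ × ℝ => ∫ s in (0:ℝ)..p.2, pdx u (p.1, s) :=
    intervalIntegral.continuous_parametric_intervalIntegral_of_continuous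
      (f := fun (p : ℝ × ℝ) (s : ℝ) => pdx u (p.1, s)) hc continuous_snd
  have : Continuous fun p : ℝ × ℝ => -∫ s in (0:ℝ)..p.2, pdx u (p.1, s) := h1.neg
  refine this.congr fun p => ?_
  rw [wOp, ← intervalIntegral.integral_symm]

-- parametric continuity of set integrals over Ioo
lemma contParam {a b : ℝ} {G : ℝ × ℝ → ℝ} (hG : Continuous G) :
    Continuous fun x => ∫ z in Ioo a b, G (x, z) := by
  have h1 : Continuous fun x => ∫ z in Icc a b, G (x, z) :=
    continuous_parametric_integral_of_continuous (f := fun x z => G (x, z))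
      (by exact hG) isCompact_Icc
  exact h1.congr fun x => MeasureTheory.integral_Icc_eq_integral_Ioo

lemma contParam' {a b : ℝ} {G : ℝ × ℝ → ℝ} (hG : Continuous G) :
    Continuous fun z => ∫ x in Ioo a b, G (x, z) := by
  have h1 : Continuous fun z => ∫ x in Icc a b, G (x, z) :=
    continuous_parametric_integral_of_continuous (f := fun z x => G (x, z))
      (by fun_prop) isCompact_Icc
  exact h1.congr fun x => MeasureTheory.integral_Icc_eq_integral_Ioo

-- pointwise bound on wOp
lemma wBound {u : ℝ × ℝ → ℝ} (hu : ContDiff ℝ 1 u) {h x z : ℝ} (hz : z ∈ Icc (-h) (0:ℝ)) :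
    |wOp u (x, z)| ≤ ∫ s in Ioo (-h) (0:ℝ), |pdx u (x, s)| := by
  have hcont : Continuous fun s => pdx u (x, s) := (contPdx hu).comp (by fun_prop)
  have h1 : |wOp u (x, z)| ≤ ∫ s in z..(0:ℝ), |pdx u (x, s)| :=
    intervalIntegral.abs_integral_le_integral_abs hz.2
  have h2 : ∫ s in z..(0:ℝ), |pdx u (x, s)| ≤ ∫ s in (-h)..(0:ℝ), |pdx u (x, s)| := by
    apply intervalIntegral.integral_mono_interval hz.1 hz.2 le_rfl
    · filter_upwards with t using abs_nonneg _
    · exact hcont.abs.intervalIntegrable _ _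
  calc |wOp u (x, z)| ≤ ∫ s in z..(0:ℝ), |pdx u (x, s)| := h1
    _ ≤ ∫ s in (-h)..(0:ℝ), |pdx u (x, s)| := h2
    _ = ∫ s in Ioo (-h) (0:ℝ), |pdx u (x, s)| := by
        rw [intervalIntegral.integral_of_le (by linarith [hz.1.trans hz.2] : (-h:ℝ) ≤ 0),
          MeasureTheory.integral_Ioc_eq_integral_Ioo]

lemma l2_nonneg (L h : ℝ) (f : ℝ × ℝ → ℝ) : 0 ≤ l2 L h f := Real.sqrt_nonneg _

lemma h1n_nonneg (L h : ℝ) (f : ℝ × ℝ → ℝ) : 0 ≤ h1n L h f := Real.sqrt_nonneg _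

lemma l2_sq (L h : ℝ) (f : ℝ × ℝ → ℝ) : l2 L h f ^ 2 = ∫ p in dom L h, f p ^ 2 :=
  Real.sq_sqrt (integral_nonneg fun p => sq_nonneg _)

lemma h1n_sq (L h : ℝ) (f : ℝ × ℝ → ℝ) :
    h1n L h f ^ 2 = l2 L h f ^ 2 + l2 L h (pdx f) ^ 2 + l2 L h (pdz f) ^ 2 :=
  Real.sq_sqrt (by positivity)

lemma l2_le_h1 (L h : ℝ) (f : ℝ × ℝ → ℝ) : l2 L h f ≤ h1n L h f := by
  have h1 := h1n_sq L h f
  have h2 := h1n_nonneg L h f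
  nlinarith [l2_nonneg L h f, sq_nonneg (l2 L h (pdx f)), sq_nonneg (l2 L h (pdz f))]

lemma pdx_le_h1 (L h : ℝ) (f : ℝ × ℝ → ℝ) : l2 L h (pdx f) ≤ h1n L h f := by
  have h1 := h1n_sq L h f
  have h2 := h1n_nonneg L h f
  nlinarith [l2_nonneg L h (pdx f), sq_nonneg (l2 L h f), sq_nonneg (l2 L h (pdz f))]

lemma pdz_le_h1 (L h : ℝ) (f : ℝ × ℝ → ℝ) : l2 L h (pdz f) ≤ h1n L h f := by
  have h1 := h1n_sq L h f
  have h2 := h1n_nonneg L h f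
  nlinarith [l2_nonneg L h (pdz f), sq_nonneg (l2 L h f), sq_nonneg (l2 L h (pdx f))]

lemma two_mul_le_h1_sq (L h : ℝ) (f : ℝ × ℝ → ℝ) :
    2 * (l2 L h f * l2 L h (pdz f)) ≤ h1n L h f ^ 2 := by
  have h1 := h1n_sq L h f
  nlinarith [sq_nonneg (l2 L h f - l2 L h (pdz f)), sq_nonneg (l2 L h (pdx f))]

set_option maxHeartbeats 2000000 in
theorem stmt9 (L h : ℝ) (hL : 0 < L) (hh : 0 < h) :
    ∃ c > 0, ∀ u φ ψ : ℝ × ℝ → ℝ,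
      ContDiff ℝ 1 u → ContDiff ℝ 1 φ → ContDiff ℝ 1 ψ →
      (∀ z ∈ Icc (-h) (0:ℝ), u (0, z) = 0 ∧ u (L, z) = 0) →
      (∀ x ∈ Icc (0:ℝ) L, u (x, -h) = 0) →
      (∀ z ∈ Icc (-h) (0:ℝ), φ (0, z) = 0 ∧ φ (L, z) = 0) →
      (∀ x ∈ Icc (0:ℝ) L, φ (x, -h) = 0) →
      (∀ z ∈ Icc (-h) (0:ℝ), ψ (0, z) = 0 ∧ ψ (L, z) = 0) →
      (∀ x ∈ Icc (0:ℝ) L, ψ (x, -h) = 0) →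
      (∀ x ∈ Icc (0:ℝ) L, (∫ z in (-h)..(0:ℝ), u (x, z)) = 0) →
      |∫ p in dom L h, (u p * pdx φ p + wOp u p * pdz φ p) * ψ p| ≤
        c * h1n L h u * h1n L h φ * l2 L h ψ ^ ((1:ℝ)/2) * h1n L h ψ ^ ((1:ℝ)/2) := by
  refine ⟨Real.sqrt 2 + Real.sqrt (2 * h), by positivity, ?_⟩
  intro u φ ψ hu hφ hψ hul hub hφl hφb hψl hψb hu0
  have cu : Continuous u := hu.continuous
  have cφ : Continuous φ := hφ.continuous
  have cψ : Continuous ψ := hψ.continuous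
  have cux : Continuous (pdx u) := contPdx hu
  have cuz : Continuous (pdz u) := contPdz hu
  have cφx : Continuous (pdx φ) := contPdx hφ
  have cφz : Continuous (pdz φ) := contPdz hφ
  have cψx : Continuous (pdx ψ) := contPdx hψ
  have cψz : Continuous (pdz ψ) := contPdz hψ
  have cw : Continuous (wOp u) := contW hu
  -- rewrite the rpow as sqrt
  rw [show l2 L h ψ ^ ((1:ℝ)/2) = Real.sqrt (l2 L h ψ) from (Real.sqrt_eq_rpow _).symm,
    show h1n L h ψ ^ ((1:ℝ)/2) = Real.sqrt (h1n L h ψ) from (Real.sqrt_eq_rpow _).symm]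
  -- the bound on B := ∫ A
  set A : ℝ → ℝ := fun z => ∫ t in Ioo 0 L, 2 * (|ψ (t, z)| * |pdx ψ (t, z)|) with hA
  have contA : Continuous A := contParam' (G := fun p => 2 * (|ψ p| * |pdx ψ p|)) (by fun_prop)
  have hA0 : ∀ z, 0 ≤ A z := fun z => integral_nonneg fun t => by positivity
  set B : ℝ := ∫ z in Ioo (-h) 0, A z with hBdef
  have hB0 : 0 ≤ B := integral_nonneg fun z => hA0 z
  have pwA : ∀ z ∈ Icc (-h) (0:ℝ), ∀ x ∈ Icc (0:ℝ) L, ψ (x, z) ^ 2 ≤ A z := by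
    intro z hz x hx
    exact sqBound (fun t => hderivX hψ z t) (by fun_prop) (by fun_prop) (hψl z hz).1 hx
  have hBle : B ≤ 2 * (l2 L h ψ * l2 L h (pdx ψ)) := by
    have hfs : ∫ p in dom L h, 2 * (|ψ p| * |pdx ψ p|)
        = ∫ z in Ioo (-h) 0, A z := by
      refine fubSwap L h (intOnDom L h (by fun_prop))
    rw [hBdef, ← hfs, MeasureTheory.integral_const_mul]
    have := myCS (volume.restrict (dom L h)) ψ (pdx ψ) (mem2Dom L h cψ) (mem2Dom L h cψx)
    have h2 : Real.sqrt (∫ p in dom L h, ψ p ^ 2) = l2 L h ψ := rfl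
    have h3 : Real.sqrt (∫ p in dom L h, pdx ψ p ^ 2) = l2 L h (pdx ψ) := rfl
    rw [← h2, ← h3]
    linarith [this]
  have pwSψ : ∀ x ∈ Icc (0:ℝ) L, (∫ z in Ioo (-h) 0, ψ (x, z) ^ 2) ≤ B := by
    intro x hx
    refine setIntegral_mono_on (intOnIoo (by fun_prop)) (intOnIoo contA) measurableSet_Ioo ?_
    intro z hz
    exact pwA z (Ioo_subset_Icc_self hz) x hx
  -- P for u
  set P : ℝ → ℝ := fun x => ∫ s in Ioo (-h) 0, 2 * (|u (x, s)| * |pdz u (x, s)|) with hP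
  have contP : Continuous P := contParam (G := fun p => 2 * (|u p| * |pdz u p|)) (by fun_prop)
  have hP0 : ∀ x, 0 ≤ P x := fun x => integral_nonneg fun s => by positivity
  have pwP : ∀ x ∈ Icc (0:ℝ) L, ∀ z ∈ Icc (-h) (0:ℝ), u (x, z) ^ 2 ≤ P x := by
    intro x hx z hz
    exact sqBound (fun t => hderivZ hu x t) (by fun_prop) (by fun_prop) (hub x hx) hz
  have hPle : (∫ x in Ioo 0 L, P x) ≤ 2 * (l2 L h u * l2 L h (pdz u)) := by
    have hfs : ∫ p in dom L h, 2 * (|u p| * |pdz u p|)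
        = ∫ x in Ioo 0 L, P x := fub L h (intOnDom L h (by fun_prop))
    rw [← hfs, MeasureTheory.integral_const_mul]
    have := myCS (volume.restrict (dom L h)) u (pdz u) (mem2Dom L h cu) (mem2Dom L h cuz)
    have h2 : Real.sqrt (∫ p in dom L h, u p ^ 2) = l2 L h u := rfl
    have h3 : Real.sqrt (∫ p in dom L h, pdz u p ^ 2) = l2 L h (pdz u) := rfl
    rw [← h2, ← h3]
    linarith [this]
  -- Term 1
  have hT1 : |∫ p in dom L h, (u p * pdx φ p) * ψ p|
      ≤ Real.sqrt 2 * h1n L h u * h1n L h φ * Real.sqrt (l2 L h ψ) * Real.sqrt (h1n L h ψ) := by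
    have habs : |∫ p in dom L h, (u p * pdx φ p) * ψ p|
        ≤ ∫ p in dom L h, |u p * ψ p| * |pdx φ p| := by
      have h1 : |∫ p in dom L h, (u p * pdx φ p) * ψ p|
          ≤ ∫ p in dom L h, |u p| * |pdx φ p| * |ψ p| := by
        simpa [Real.norm_eq_abs] using MeasureTheory.norm_integral_le_integral_norm
          (f := fun p => (u p * pdx φ p) * ψ p) (μ := volume.restrict (dom L h))
      refine h1.trans (le_of_eq (integral_congr_ae (Filter.Eventually.of_forall fun p => ?_)))
      show |u p| * |pdx φ p| * |ψ p| = |u p * ψ p| * |pdx φ p|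
      rw [abs_mul]; ring
    have hcs := myCS (volume.restrict (dom L h)) (fun p => u p * ψ p) (pdx φ)
      (mem2Dom L h (by fun_prop)) (mem2Dom L h cφx)
    have hE1 : (∫ p in dom L h, (u p * ψ p) ^ 2)
        ≤ (2 * (l2 L h u * l2 L h (pdz u))) * (2 * (l2 L h ψ * l2 L h (pdx ψ))) := by
      have hfub : ∫ p in dom L h, (u p * ψ p) ^ 2
          = ∫ x in Ioo 0 L, ∫ z in Ioo (-h) 0, (u (x, z) * ψ (x, z)) ^ 2 :=
        fub L h (intOnDom L h (by fun_prop))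
      have hinner : ∀ x ∈ Icc (0:ℝ) L,
          (∫ z in Ioo (-h) 0, (u (x, z) * ψ (x, z)) ^ 2) ≤ P x * B := by
        intro x hx
        have hstep : (∫ z in Ioo (-h) 0, (u (x, z) * ψ (x, z)) ^ 2)
            ≤ ∫ z in Ioo (-h) 0, P x * A z := by
          refine setIntegral_mono_on (intOnIoo (by fun_prop))
            (intOnIoo (continuous_const.mul contA)) measurableSet_Ioo ?_
          intro z hz
          have h1 := pwP x hx z (Ioo_subset_Icc_self hz)
          have h2 := pwA z (Ioo_subset_Icc_self hz) x hx
          calc (u (x, z) * ψ (x, z)) ^ 2 = u (x, z) ^ 2 * ψ (x, z) ^ 2 := by ring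
            _ ≤ P x * A z := mul_le_mul h1 h2 (sq_nonneg _) (hP0 x)
        rw [MeasureTheory.integral_const_mul] at hstep
        exact hstep
      have houter : (∫ x in Ioo 0 L, ∫ z in Ioo (-h) 0, (u (x, z) * ψ (x, z)) ^ 2)
          ≤ ∫ x in Ioo 0 L, P x * B := by
        refine setIntegral_mono_on ?_ ?_ measurableSet_Ioo ?_
        · exact intOnIoo (contParam (G := fun p => (u p * ψ p) ^ 2) (by fun_prop))
        · exact intOnIoo (contP.mul continuous_const)
        · intro x hx; exact hinner x (Ioo_subset_Icc_self hx)
      have hPB : (∫ x in Ioo 0 L, P x * B) = (∫ x in Ioo 0 L, P x) * B :=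
        MeasureTheory.integral_mul_const _ _
      have hPnn : (0:ℝ) ≤ 2 * (l2 L h u * l2 L h (pdz u)) := by
        have := l2_nonneg L h u; have := l2_nonneg L h (pdz u); positivity
      calc (∫ p in dom L h, (u p * ψ p) ^ 2)
          = ∫ x in Ioo 0 L, ∫ z in Ioo (-h) 0, (u (x, z) * ψ (x, z)) ^ 2 := hfub
        _ ≤ ∫ x in Ioo 0 L, P x * B := houter
        _ = (∫ x in Ioo 0 L, P x) * B := hPB
        _ ≤ (2 * (l2 L h u * l2 L h (pdz u))) * (2 * (l2 L h ψ * l2 L h (pdx ψ))) :=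
            mul_le_mul hPle hBle hB0 hPnn
    have s1 : Real.sqrt (∫ p in dom L h, (u p * ψ p) ^ 2)
        ≤ h1n L h u * (Real.sqrt 2 * (Real.sqrt (l2 L h ψ) * Real.sqrt (h1n L h ψ))) := by
      have e1 : (∫ p in dom L h, (u p * ψ p) ^ 2)
          ≤ (2 * (l2 L h u * l2 L h (pdz u))) * (2 * (l2 L h ψ * h1n L h ψ)) := by
        refine hE1.trans ?_
        have h1 : 2 * (l2 L h ψ * l2 L h (pdx ψ)) ≤ 2 * (l2 L h ψ * h1n L h ψ) := by
          have := pdx_le_h1 L h ψ; have := l2_nonneg L h ψ; nlinarith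
        have h2 : (0:ℝ) ≤ 2 * (l2 L h u * l2 L h (pdz u)) := by
          have := l2_nonneg L h u; have := l2_nonneg L h (pdz u); positivity
        exact mul_le_mul_of_nonneg_left h1 h2
      calc Real.sqrt (∫ p in dom L h, (u p * ψ p) ^ 2)
          ≤ Real.sqrt ((2 * (l2 L h u * l2 L h (pdz u))) * (2 * (l2 L h ψ * h1n L h ψ))) :=
            Real.sqrt_le_sqrt e1
        _ = Real.sqrt (2 * (l2 L h u * l2 L h (pdz u))) *
            Real.sqrt (2 * (l2 L h ψ * h1n L h ψ)) := by
            refine Real.sqrt_mul ?_ _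
            have := l2_nonneg L h u; have := l2_nonneg L h (pdz u); positivity
        _ ≤ h1n L h u * Real.sqrt (2 * (l2 L h ψ * h1n L h ψ)) := by
            refine mul_le_mul_of_nonneg_right ?_ (Real.sqrt_nonneg _)
            calc Real.sqrt (2 * (l2 L h u * l2 L h (pdz u)))
                ≤ Real.sqrt (h1n L h u ^ 2) := Real.sqrt_le_sqrt (two_mul_le_h1_sq L h u)
              _ = h1n L h u := Real.sqrt_sq (h1n_nonneg L h u)
        _ = h1n L h u * (Real.sqrt 2 * (Real.sqrt (l2 L h ψ) * Real.sqrt (h1n L h ψ))) := by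
            rw [Real.sqrt_mul (by norm_num : (0:ℝ) ≤ 2),
              Real.sqrt_mul (l2_nonneg L h ψ)]
    calc |∫ p in dom L h, (u p * pdx φ p) * ψ p|
        ≤ ∫ p in dom L h, |u p * ψ p| * |pdx φ p| := habs
      _ ≤ Real.sqrt (∫ p in dom L h, (u p * ψ p) ^ 2) *
          Real.sqrt (∫ p in dom L h, pdx φ p ^ 2) := hcs
      _ ≤ (h1n L h u * (Real.sqrt 2 * (Real.sqrt (l2 L h ψ) * Real.sqrt (h1n L h ψ)))) *
          l2 L h (pdx φ) :=
          mul_le_mul_of_nonneg_right s1 (Real.sqrt_nonneg _)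
      _ ≤ (h1n L h u * (Real.sqrt 2 * (Real.sqrt (l2 L h ψ) * Real.sqrt (h1n L h ψ)))) *
          h1n L h φ := by
          refine mul_le_mul_of_nonneg_left (pdx_le_h1 L h φ) ?_
          have := h1n_nonneg L h u; positivity
      _ = Real.sqrt 2 * h1n L h u * h1n L h φ * Real.sqrt (l2 L h ψ) *
          Real.sqrt (h1n L h ψ) := by ring
  -- Term 2
  set W : ℝ → ℝ := fun x => ∫ s in Ioo (-h) 0, |pdx u (x, s)| with hWdef
  have contWW : Continuous W := contParam (G := fun p => |pdx u p|) (by fun_prop)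
  have hW0 : ∀ x, 0 ≤ W x := fun x => integral_nonneg fun s => abs_nonneg _
  set Q : ℝ → ℝ := fun x => ∫ s in Ioo (-h) 0, (pdz φ (x, s)) ^ 2 with hQdef
  have contQ : Continuous Q := contParam (G := fun p => (pdz φ p) ^ 2) (by fun_prop)
  have hQ0 : ∀ x, 0 ≤ Q x := fun x => integral_nonneg fun s => sq_nonneg _
  have hT2 : |∫ p in dom L h, (wOp u p * pdz φ p) * ψ p|
      ≤ Real.sqrt (2 * h) * h1n L h u * h1n L h φ * Real.sqrt (l2 L h ψ) *
        Real.sqrt (h1n L h ψ) := by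
    have habs : |∫ p in dom L h, (wOp u p * pdz φ p) * ψ p|
        ≤ ∫ p in dom L h, |wOp u p| * |pdz φ p| * |ψ p| := by
      simpa [Real.norm_eq_abs] using MeasureTheory.norm_integral_le_integral_norm
        (f := fun p => (wOp u p * pdz φ p) * ψ p) (μ := volume.restrict (dom L h))
    have hfub2 : ∫ p in dom L h, |wOp u p| * |pdz φ p| * |ψ p|
        = ∫ x in Ioo 0 L, ∫ z in Ioo (-h) 0,
            |wOp u (x, z)| * |pdz φ (x, z)| * |ψ (x, z)| :=
      fub L h (intOnDom L h (by fun_prop))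
    have hinner : ∀ x ∈ Icc (0:ℝ) L,
        (∫ z in Ioo (-h) 0, |wOp u (x, z)| * |pdz φ (x, z)| * |ψ (x, z)|)
          ≤ (W x * Real.sqrt (Q x)) * Real.sqrt B := by
      intro x hx
      have hstepa : (∫ z in Ioo (-h) 0, |wOp u (x, z)| * |pdz φ (x, z)| * |ψ (x, z)|)
          ≤ ∫ z in Ioo (-h) 0, W x * (|pdz φ (x, z)| * |ψ (x, z)|) := by
        refine setIntegral_mono_on (intOnIoo (by fun_prop)) (intOnIoo (by fun_prop))
          measurableSet_Ioo ?_
        intro z hz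
        rw [mul_assoc]
        refine mul_le_mul_of_nonneg_right ?_ (by positivity)
        exact wBound hu (Ioo_subset_Icc_self hz)
      rw [MeasureTheory.integral_const_mul] at hstepa
      have hstepc : (∫ z in Ioo (-h) 0, |pdz φ (x, z)| * |ψ (x, z)|)
          ≤ Real.sqrt (Q x) * Real.sqrt (∫ z in Ioo (-h) 0, ψ (x, z) ^ 2) :=
        myCS (volume.restrict (Ioo (-h) 0)) (fun z => pdz φ (x, z)) (fun z => ψ (x, z))
          (mem2Ioo (by fun_prop)) (mem2Ioo (by fun_prop))
      have hstepd : Real.sqrt (∫ z in Ioo (-h) 0, ψ (x, z) ^ 2) ≤ Real.sqrt B :=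
        Real.sqrt_le_sqrt (pwSψ x hx)
      calc (∫ z in Ioo (-h) 0, |wOp u (x, z)| * |pdz φ (x, z)| * |ψ (x, z)|)
          ≤ W x * ∫ z in Ioo (-h) 0, |pdz φ (x, z)| * |ψ (x, z)| := hstepa
        _ ≤ W x * (Real.sqrt (Q x) * Real.sqrt (∫ z in Ioo (-h) 0, ψ (x, z) ^ 2)) :=
            mul_le_mul_of_nonneg_left hstepc (hW0 x)
        _ ≤ W x * (Real.sqrt (Q x) * Real.sqrt B) := by
            refine mul_le_mul_of_nonneg_left ?_ (hW0 x)
            exact mul_le_mul_of_nonneg_left hstepd (Real.sqrt_nonneg _)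
        _ = (W x * Real.sqrt (Q x)) * Real.sqrt B := by ring
    have houter : (∫ x in Ioo 0 L, ∫ z in Ioo (-h) 0,
          |wOp u (x, z)| * |pdz φ (x, z)| * |ψ (x, z)|)
        ≤ ∫ x in Ioo 0 L, (W x * Real.sqrt (Q x)) * Real.sqrt B := by
      refine setIntegral_mono_on ?_ ?_ measurableSet_Ioo ?_
      · exact intOnIoo (contParam
          (G := fun p => |wOp u p| * |pdz φ p| * |ψ p|) (by fun_prop))
      · exact intOnIoo (by fun_prop)
      · intro x hx; exact hinner x (Ioo_subset_Icc_self hx)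
    rw [MeasureTheory.integral_mul_const] at houter
    -- Cauchy-Schwarz in x for W * sqrt Q
    have hWQ : (∫ x in Ioo 0 L, W x * Real.sqrt (Q x))
        ≤ Real.sqrt (∫ x in Ioo 0 L, W x ^ 2) * Real.sqrt (∫ x in Ioo 0 L, Q x) := by
      have h1 : (∫ x in Ioo 0 L, W x * Real.sqrt (Q x))
          = ∫ x in Ioo 0 L, |W x| * |Real.sqrt (Q x)| := by
        refine integral_congr_ae (Filter.Eventually.of_forall fun x => ?_)
        show W x * Real.sqrt (Q x) = |W x| * |Real.sqrt (Q x)|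
        rw [abs_of_nonneg (hW0 x), abs_of_nonneg (Real.sqrt_nonneg _)]
      have h2 := myCS (volume.restrict (Ioo 0 L)) W (fun x => Real.sqrt (Q x))
        (mem2Ioo contWW) (mem2Ioo (by fun_prop))
      have h3 : (∫ x in Ioo 0 L, (Real.sqrt (Q x)) ^ 2) = ∫ x in Ioo 0 L, Q x := by
        refine integral_congr_ae (Filter.Eventually.of_forall fun x => ?_)
        exact Real.sq_sqrt (hQ0 x)
      rw [h1]
      calc (∫ x in Ioo 0 L, |W x| * |Real.sqrt (Q x)|)
          ≤ Real.sqrt (∫ x in Ioo 0 L, W x ^ 2) *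
            Real.sqrt (∫ x in Ioo 0 L, (Real.sqrt (Q x)) ^ 2) := h2
        _ = Real.sqrt (∫ x in Ioo 0 L, W x ^ 2) * Real.sqrt (∫ x in Ioo 0 L, Q x) := by
            rw [h3]
    -- bound on ∫ Q
    have hQint : (∫ x in Ioo 0 L, Q x) = l2 L h (pdz φ) ^ 2 := by
      rw [l2_sq]
      exact (fub L h (f := fun p => (pdz φ p) ^ 2) (intOnDom L h (by fun_prop))).symm
    -- bound on ∫ W^2
    have hWsq : (∫ x in Ioo 0 L, W x ^ 2) ≤ l2 L h (pdx u) ^ 2 * h := by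
      have hpw : ∀ x, W x ^ 2 ≤ (∫ s in Ioo (-h) 0, (pdx u (x, s)) ^ 2) * h := by
        intro x
        have hone : (∫ s in Ioo (-h) 0, |pdx u (x, s)| * |(1:ℝ)|)
            ≤ Real.sqrt (∫ s in Ioo (-h) 0, (pdx u (x, s)) ^ 2) *
              Real.sqrt (∫ s in Ioo (-h) 0, (1:ℝ) ^ 2) :=
          myCS (volume.restrict (Ioo (-h) 0)) (fun s => pdx u (x, s)) (fun _ => (1:ℝ))
            (mem2Ioo (by fun_prop)) (mem2Ioo continuous_const)
        have hconst : (∫ s in Ioo (-h) 0, (1:ℝ) ^ 2) = h := by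
          simp [Real.volume_Ioo]
          linarith
        have hWle : W x ≤ Real.sqrt (∫ s in Ioo (-h) 0, (pdx u (x, s)) ^ 2) *
            Real.sqrt h := by
          rw [hconst] at hone
          refine le_trans (le_of_eq ?_) hone
          refine integral_congr_ae (Filter.Eventually.of_forall fun s => ?_)
          simp
        calc W x ^ 2 ≤ (Real.sqrt (∫ s in Ioo (-h) 0, (pdx u (x, s)) ^ 2) *
              Real.sqrt h) ^ 2 := by
              have := hW0 x
              nlinarith [Real.sqrt_nonneg (∫ s in Ioo (-h) 0, (pdx u (x, s)) ^ 2),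
                Real.sqrt_nonneg h]
          _ = (∫ s in Ioo (-h) 0, (pdx u (x, s)) ^ 2) * h := by
              rw [mul_pow, Real.sq_sqrt (integral_nonneg fun s => sq_nonneg _),
                Real.sq_sqrt hh.le]
      have hmono : (∫ x in Ioo 0 L, W x ^ 2)
          ≤ ∫ x in Ioo 0 L, (∫ s in Ioo (-h) 0, (pdx u (x, s)) ^ 2) * h := by
        refine setIntegral_mono_on (intOnIoo (by fun_prop)) ?_ measurableSet_Ioo
          fun x _ => hpw x
        exact intOnIoo ((contParam (G := fun p => (pdx u p) ^ 2) (by fun_prop)).mul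
          continuous_const)
      refine hmono.trans (le_of_eq ?_)
      rw [MeasureTheory.integral_mul_const, l2_sq]
      congr 1
      exact (fub L h (f := fun p => (pdx u p) ^ 2) (intOnDom L h (by fun_prop))).symm
    -- assemble T2
    have hsB : Real.sqrt B ≤ Real.sqrt 2 * (Real.sqrt (l2 L h ψ) * Real.sqrt (h1n L h ψ)) := by
      have h1 : B ≤ 2 * (l2 L h ψ * h1n L h ψ) := by
        refine hBle.trans ?_
        have := pdx_le_h1 L h ψ; have := l2_nonneg L h ψ; nlinarith
      calc Real.sqrt B ≤ Real.sqrt (2 * (l2 L h ψ * h1n L h ψ)) := Real.sqrt_le_sqrt h1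
        _ = Real.sqrt 2 * (Real.sqrt (l2 L h ψ) * Real.sqrt (h1n L h ψ)) := by
            rw [Real.sqrt_mul (by norm_num : (0:ℝ) ≤ 2), Real.sqrt_mul (l2_nonneg L h ψ)]
    have hsW : Real.sqrt (∫ x in Ioo 0 L, W x ^ 2) ≤ l2 L h (pdx u) * Real.sqrt h := by
      calc Real.sqrt (∫ x in Ioo 0 L, W x ^ 2)
          ≤ Real.sqrt (l2 L h (pdx u) ^ 2 * h) := Real.sqrt_le_sqrt hWsq
        _ = l2 L h (pdx u) * Real.sqrt h := by
            rw [Real.sqrt_mul (sq_nonneg _), Real.sqrt_sq (l2_nonneg L h (pdx u))]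
    have hsQ : Real.sqrt (∫ x in Ioo 0 L, Q x) = l2 L h (pdz φ) := by
      rw [hQint, Real.sqrt_sq (l2_nonneg L h (pdz φ))]
    have hWQnn : (0:ℝ) ≤ ∫ x in Ioo 0 L, W x * Real.sqrt (Q x) :=
      integral_nonneg fun x => mul_nonneg (hW0 x) (Real.sqrt_nonneg _)
    calc |∫ p in dom L h, (wOp u p * pdz φ p) * ψ p|
        ≤ ∫ p in dom L h, |wOp u p| * |pdz φ p| * |ψ p| := habs
      _ = ∫ x in Ioo 0 L, ∫ z in Ioo (-h) 0,
            |wOp u (x, z)| * |pdz φ (x, z)| * |ψ (x, z)| := hfub2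
      _ ≤ (∫ x in Ioo 0 L, W x * Real.sqrt (Q x)) * Real.sqrt B := houter
      _ ≤ (Real.sqrt (∫ x in Ioo 0 L, W x ^ 2) * Real.sqrt (∫ x in Ioo 0 L, Q x)) *
            Real.sqrt B := mul_le_mul_of_nonneg_right hWQ (Real.sqrt_nonneg _)
      _ ≤ ((l2 L h (pdx u) * Real.sqrt h) * l2 L h (pdz φ)) * Real.sqrt B := by
          rw [hsQ]
          refine mul_le_mul_of_nonneg_right
            (mul_le_mul_of_nonneg_right hsW (l2_nonneg L h (pdz φ))) (Real.sqrt_nonneg _)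
      _ ≤ ((l2 L h (pdx u) * Real.sqrt h) * l2 L h (pdz φ)) *
            (Real.sqrt 2 * (Real.sqrt (l2 L h ψ) * Real.sqrt (h1n L h ψ))) := by
          refine mul_le_mul_of_nonneg_left hsB ?_
          have := l2_nonneg L h (pdx u); have := l2_nonneg L h (pdz φ); positivity
      _ ≤ ((h1n L h u * Real.sqrt h) * h1n L h φ) *
            (Real.sqrt 2 * (Real.sqrt (l2 L h ψ) * Real.sqrt (h1n L h ψ))) := by
          have h1 := pdx_le_h1 L h u
          have h2 := pdz_le_h1 L h φ
          refine mul_le_mul_of_nonneg_right ?_ (by positivity)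
          refine mul_le_mul (mul_le_mul_of_nonneg_right h1 (Real.sqrt_nonneg h)) h2
            (l2_nonneg L h (pdz φ)) ?_
          have := h1n_nonneg L h u; positivity
      _ = Real.sqrt (2 * h) * h1n L h u * h1n L h φ * Real.sqrt (l2 L h ψ) *
            Real.sqrt (h1n L h ψ) := by
          rw [Real.sqrt_mul (by norm_num : (0:ℝ) ≤ 2)]
          ring
  -- combine
  have hsplit : (∫ p in dom L h, (u p * pdx φ p + wOp u p * pdz φ p) * ψ p)
      = (∫ p in dom L h, (u p * pdx φ p) * ψ p)
        + ∫ p in dom L h, (wOp u p * pdz φ p) * ψ p := by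
    rw [← MeasureTheory.integral_add (intOnDom L h (by fun_prop)) (intOnDom L h (by fun_prop))]
    refine integral_congr_ae (Filter.Eventually.of_forall fun p => ?_)
    show (u p * pdx φ p + wOp u p * pdz φ p) * ψ p
        = (u p * pdx φ p) * ψ p + (wOp u p * pdz φ p) * ψ p
    ring
  rw [hsplit]
  calc |(∫ p in dom L h, (u p * pdx φ p) * ψ p)
        + ∫ p in dom L h, (wOp u p * pdz φ p) * ψ p|
      ≤ |∫ p in dom L h, (u p * pdx φ p) * ψ p|
        + |∫ p in dom L h, (wOp u p * pdz φ p) * ψ p| := abs_add_le _ _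
    _ ≤ Real.sqrt 2 * h1n L h u * h1n L h φ * Real.sqrt (l2 L h ψ) * Real.sqrt (h1n L h ψ)
        + Real.sqrt (2 * h) * h1n L h u * h1n L h φ * Real.sqrt (l2 L h ψ) *
          Real.sqrt (h1n L h ψ) := add_le_add hT1 hT2
    _ = (Real.sqrt 2 + Real.sqrt (2 * h)) * h1n L h u * h1n L h φ * Real.sqrt (l2 L h ψ) *
          Real.sqrt (h1n L h ψ) := by ring
end

section
/- There exists a constant c > 0, depending only on L and h, such that for every u of class C² on M̄ vanishing on Γ_l ∪ Γ_b with ∫_{−h}^0 u(x,z) dz = 0 for all x, the L² norm of the nonlinear term satisfies | u ∂_x u + w(u) ∂_z u |² ≤ c ‖u‖_{H¹}³ |u|_{H²}. -/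
open MeasureTheory Set intervalIntegral

lemma intOn_dom {L h : ℝ} {f : ℝ × ℝ → ℝ} (hf : Continuous f) : IntegrableOn f (dom L h) := by
  have : IntegrableOn f (cdom L h) :=
    hf.continuousOn.integrableOn_compact (isCompact_Icc.prod isCompact_Icc)
  exact this.mono_set (prod_mono Ioo_subset_Icc_self Ioo_subset_Icc_self)

lemma memL2_dom {L h : ℝ} {f : ℝ × ℝ → ℝ} (hf : Continuous f) :
    MemLp f 2 (volume.restrict (dom L h)) :=
  (memLp_two_iff_integrable_sq hf.aestronglyMeasurable.restrict).mpr (intOn_dom (hf.pow 2))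

lemma memL2_Ioc {f : ℝ → ℝ} (hf : Continuous f) (a b : ℝ) :
    MemLp f 2 (volume.restrict (Ioc a b)) :=
  (memLp_two_iff_integrable_sq hf.aestronglyMeasurable.restrict).mpr
    ((hf.pow 2).integrableOn_Ioc)

-- Cauchy-Schwarz for integrals
lemma my_cs {α : Type*} [MeasurableSpace α] (μ : Measure α) (f g : α → ℝ)
    (hf : MemLp f 2 μ) (hg : MemLp g 2 μ) :
    ∫ a, |f a * g a| ∂μ ≤ Real.sqrt (∫ a, f a ^ 2 ∂μ) * Real.sqrt (∫ a, g a ^ 2 ∂μ) := by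
  have h := integral_mul_le_Lp_mul_Lq_of_nonneg (f := fun a => |f a|) (g := fun a => |g a|)
    (μ := μ) (Real.holderConjugate_iff.mpr ⟨by norm_num, by norm_num⟩ : Real.HolderConjugate 2 2)
    (Filter.Eventually.of_forall fun a => abs_nonneg _)
    (Filter.Eventually.of_forall fun a => abs_nonneg _) ?_ ?_
  · have e1 : ∀ a, |f a| ^ (2:ℝ) = f a ^ 2 := by
      intro a; rw [show (2:ℝ) = ((2:ℕ):ℝ) by norm_num, Real.rpow_natCast, sq_abs]
    have e2 : ∀ a, |g a| ^ (2:ℝ) = g a ^ 2 := by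
      intro a; rw [show (2:ℝ) = ((2:ℕ):ℝ) by norm_num, Real.rpow_natCast, sq_abs]
    simp only [e1, e2, abs_mul] at h ⊢
    calc ∫ a, |f a| * |g a| ∂μ ≤ _ := h
    _ = _ := by
      rw [Real.sqrt_eq_rpow, Real.sqrt_eq_rpow]
  · simpa [ENNReal.ofReal_ofNat] using (show MemLp (fun a => |f a|) 2 μ from hf.abs)
  · simpa [ENNReal.ofReal_ofNat] using (show MemLp (fun a => |g a|) 2 μ from hg.abs)

-- derivatives as continuous funcs
lemma pdx_continuous {u : ℝ × ℝ → ℝ} (hu : ContDiff ℝ 1 u) : Continuous (pdx u) := by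
  exact (hu.continuous_fderiv one_ne_zero).clm_apply continuous_const

lemma pdz_continuous {u : ℝ × ℝ → ℝ} (hu : ContDiff ℝ 1 u) : Continuous (pdz u) := by
  exact (hu.continuous_fderiv one_ne_zero).clm_apply continuous_const

lemma pdx_contDiff {u : ℝ × ℝ → ℝ} (hu : ContDiff ℝ 2 u) : ContDiff ℝ 1 (pdx u) :=
  (hu.fderiv_right (by norm_num)).clm_apply contDiff_const

lemma pdz_contDiff {u : ℝ × ℝ → ℝ} (hu : ContDiff ℝ 2 u) : ContDiff ℝ 1 (pdz u) :=
  (hu.fderiv_right (by norm_num)).clm_apply contDiff_const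

-- partial derivatives as 1D derivatives
lemma hasDerivAt_fst {u : ℝ × ℝ → ℝ} (hu : ContDiff ℝ 1 u) (s x : ℝ) :
    HasDerivAt (fun ξ => u (ξ, s)) (pdx u (x, s)) x := by
  have h1 : HasFDerivAt u (fderiv ℝ u (x, s)) (x, s) :=
    (hu.differentiable one_ne_zero (x, s)).hasFDerivAt
  have h2 : HasDerivAt (fun ξ : ℝ => (ξ, s)) ((1:ℝ), (0:ℝ)) x := by
    simpa using ((hasDerivAt_id x).prodMk (hasDerivAt_const x s))
  exact h1.comp_hasDerivAt x h2

lemma hasDerivAt_snd {u : ℝ × ℝ → ℝ} (hu : ContDiff ℝ 1 u) (x s : ℝ) :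
    HasDerivAt (fun ζ => u (x, ζ)) (pdz u (x, s)) s := by
  have h1 : HasFDerivAt u (fderiv ℝ u (x, s)) (x, s) :=
    (hu.differentiable one_ne_zero (x, s)).hasFDerivAt
  have h2 : HasDerivAt (fun ζ : ℝ => (x, ζ)) ((0:ℝ), (1:ℝ)) s := by
    simpa using ((hasDerivAt_const s x).prodMk (hasDerivAt_id s))
  exact h1.comp_hasDerivAt s h2

-- 1D Cauchy-Schwarz
lemma cs1d {f : ℝ → ℝ} (hf : Continuous f) {a b : ℝ} (hab : a ≤ b) :
    (∫ t in a..b, f t) ^ 2 ≤ (b - a) * ∫ t in a..b, f t ^ 2 := by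
  rw [intervalIntegral.integral_of_le hab, intervalIntegral.integral_of_le hab]
  have h1 : |∫ t in Ioc a b, f t| ≤ ∫ t in Ioc a b, |f t| :=
    norm_integral_le_integral_norm f
  have h2 : ∫ t in Ioc a b, |f t| ≤ Real.sqrt (∫ t in Ioc a b, f t ^ 2) * Real.sqrt (b - a) := by
    have := my_cs (volume.restrict (Ioc a b)) f (fun _ => (1:ℝ)) (memL2_Ioc hf a b)
      (memL2_Ioc continuous_const a b)
    simp only [mul_one, one_pow] at this
    calc ∫ t in Ioc a b, |f t| ≤ _ := this
    _ = Real.sqrt (∫ t in Ioc a b, f t ^ 2) * Real.sqrt (b - a) := by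
      rw [setIntegral_const]
      simp [Real.volume_Ioc, ENNReal.toReal_ofReal (by linarith : (0:ℝ) ≤ b - a), max_eq_left (sub_nonneg.mpr hab)]
  have h3 : 0 ≤ ∫ t in Ioc a b, f t ^ 2 :=
    setIntegral_nonneg measurableSet_Ioc (fun _ _ => sq_nonneg _)
  calc (∫ t in Ioc a b, f t) ^ 2 = |∫ t in Ioc a b, f t| ^ 2 := (sq_abs _).symm
  _ ≤ (Real.sqrt (∫ t in Ioc a b, f t ^ 2) * Real.sqrt (b - a)) ^ 2 := by
      apply pow_le_pow_left₀ (abs_nonneg _) (h1.trans h2)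
  _ = (b - a) * ∫ t in Ioc a b, f t ^ 2 := by
      rw [mul_pow, Real.sq_sqrt h3, Real.sq_sqrt (by linarith : (0:ℝ) ≤ b - a)]; ring

-- 2D Cauchy-Schwarz in l2 form
lemma cs2d (L h : ℝ) {f g : ℝ × ℝ → ℝ} (hf : Continuous f) (hg : Continuous g) :
    ∫ p in dom L h, |f p * g p| ≤ l2 L h f * l2 L h g := by
  exact my_cs (volume.restrict (dom L h)) f g (memL2_dom hf) (memL2_dom hg)

-- Fubini for dom
lemma fub1 (L h : ℝ) {F : ℝ × ℝ → ℝ} (hF : Continuous F) :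
    ∫ p in dom L h, F p = ∫ x in Ioo 0 L, ∫ s in Ioo (-h) 0, F (x, s) := by
  rw [dom, Measure.volume_eq_prod]
  exact setIntegral_prod F (by rw [← Measure.volume_eq_prod]; exact intOn_dom hF)

lemma fub2 (L h : ℝ) {F : ℝ × ℝ → ℝ} (hF : Continuous F) :
    ∫ p in dom L h, F p = ∫ s in Ioo (-h) 0, ∫ x in Ioo 0 L, F (x, s) := by
  rw [fub1 L h hF]
  apply integral_integral_swap
  rw [Measure.prod_restrict]
  have : IntegrableOn (fun p : ℝ × ℝ => F p) (Ioo 0 L ×ˢ Ioo (-h) 0) volume := intOn_dom hF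
  rw [Measure.volume_eq_prod] at this
  exact this

lemma ptws {v : ℝ × ℝ → ℝ} (hv : ContDiff ℝ 1 v) {L : ℝ} {x x₀ : ℝ}
    (hx : x ∈ Icc 0 L) (hx₀ : x₀ ∈ Icc 0 L) (s : ℝ) :
    v (x, s) ^ 2 ≤ v (x₀, s) ^ 2 + ∫ ξ in Ioc 0 L, 2 * |v (ξ, s) * pdx v (ξ, s)| := by
  have hcont : Continuous fun ξ => v (ξ, s) := hv.continuous.comp (by fun_prop)
  have hcont' : Continuous fun ξ => pdx v (ξ, s) :=
    (pdx_continuous hv).comp (by fun_prop)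
  have ftc : ∫ ξ in x₀..x, 2 * v (ξ, s) * pdx v (ξ, s) = v (x, s) ^ 2 - v (x₀, s) ^ 2 := by
    apply intervalIntegral.integral_eq_sub_of_hasDerivAt
    · intro t _
      have := (hasDerivAt_fst hv s t).fun_pow 2
      convert this using 1
      all_goals first | rfl | ring
    · exact ((continuous_const.mul hcont).mul hcont').intervalIntegrable _ _
  have habs : v (x, s) ^ 2 - v (x₀, s) ^ 2 ≤
      ∫ ξ in Ioc 0 L, 2 * |v (ξ, s) * pdx v (ξ, s)| := by
    rw [← ftc]
    calc ∫ ξ in x₀..x, 2 * v (ξ, s) * pdx v (ξ, s)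
        ≤ |∫ ξ in x₀..x, 2 * v (ξ, s) * pdx v (ξ, s)| := le_abs_self _
      _ = |∫ ξ in Set.uIoc x₀ x, 2 * v (ξ, s) * pdx v (ξ, s)| :=
          intervalIntegral.abs_intervalIntegral_eq _ _ _ _
      _ ≤ ∫ ξ in Set.uIoc x₀ x, |2 * v (ξ, s) * pdx v (ξ, s)| := by
          exact MeasureTheory.norm_integral_le_integral_norm (fun ξ => 2 * v (ξ, s) * pdx v (ξ, s))
      _ = ∫ ξ in Set.uIoc x₀ x, 2 * |v (ξ, s) * pdx v (ξ, s)| := by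
          congr 1; ext ξ; rw [mul_assoc, abs_mul, abs_mul]; simp [abs_mul]
      _ ≤ ∫ ξ in Ioc 0 L, 2 * |v (ξ, s) * pdx v (ξ, s)| := by
          apply setIntegral_mono_set
          · exact ((continuous_const.mul (hcont.mul hcont').abs).integrableOn_Ioc)
          · exact Filter.Eventually.of_forall fun ξ =>
              mul_nonneg (by norm_num) (abs_nonneg _)
          · apply HasSubset.Subset.eventuallyLE
            rw [uIoc]
            exact Ioc_subset_Ioc (le_min hx₀.1 hx.1) (max_le hx₀.2 hx.2)
  linarith

lemma sliceBound (L h : ℝ) (hL : 0 < L) (hh : 0 < h) {v : ℝ × ℝ → ℝ}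
    (hv : ContDiff ℝ 1 v) {x : ℝ} (hx : x ∈ Icc 0 L) :
    ∫ s in (-h)..0, v (x, s) ^ 2 ≤
      (1 / L) * (∫ p in dom L h, v p ^ 2) + 2 * ∫ p in dom L h, |v p * pdx v p| := by
  have hvc : Continuous v := hv.continuous
  have hvx : Continuous (pdx v) := pdx_continuous hv
  have hq : Continuous fun p : ℝ × ℝ => v p ^ 2 := hvc.pow 2
  have hqa : Continuous fun p : ℝ × ℝ => 2 * |v p * pdx v p| :=
    continuous_const.mul (hvc.mul hvx).abs
  have hmh : (-h) ≤ 0 := by linarith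
  set G : ℝ → ℝ := fun ξ => ∫ s in (-h)..0, v (ξ, s) ^ 2 with hGdef
  set Φ : ℝ → ℝ := fun s => ∫ ξ in Ioc 0 L, 2 * |v (ξ, s) * pdx v (ξ, s)| with hΦdef
  set C : ℝ := ∫ p in dom L h, |v p * pdx v p| with hCdef
  have hΦcont : Continuous Φ := by
    have h1 : Continuous fun s => ∫ ξ in (0:ℝ)..L, 2 * |v (ξ, s) * pdx v (ξ, s)| :=
      continuous_parametric_intervalIntegral_of_continuous'
        (f := fun s ξ => 2 * |v (ξ, s) * pdx v (ξ, s)|)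
        (hqa.comp continuous_swap) 0 L
    have h2 : ∀ s, Φ s = ∫ ξ in (0:ℝ)..L, 2 * |v (ξ, s) * pdx v (ξ, s)| := fun s =>
      (intervalIntegral.integral_of_le hL.le).symm
    simpa only [← h2] using h1
  have hGcont : Continuous G :=
    continuous_parametric_intervalIntegral_of_continuous'
      (f := fun ξ s => v (ξ, s) ^ 2) hq (-h) 0
  -- Step 1
  have step1 : ∀ x₀ ∈ Icc 0 L, G x ≤ G x₀ + ∫ s in (-h)..0, Φ s := by
    intro x₀ hx₀
    have hint1 : IntervalIntegrable (fun s => v (x, s) ^ 2) volume (-h) 0 :=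
      (hq.comp (continuous_const.prodMk continuous_id)).intervalIntegrable _ _
    have hint2 : IntervalIntegrable (fun s => v (x₀, s) ^ 2) volume (-h) 0 :=
      (hq.comp (continuous_const.prodMk continuous_id)).intervalIntegrable _ _
    have hmono : ∫ s in (-h)..0, v (x, s) ^ 2 ≤ ∫ s in (-h)..0, (v (x₀, s) ^ 2 + Φ s) := by
      apply intervalIntegral.integral_mono_on hmh hint1
        (hint2.add (hΦcont.intervalIntegrable _ _))
      intro s _; exact ptws hv hx hx₀ s
    rw [intervalIntegral.integral_add hint2 (hΦcont.intervalIntegrable _ _)] at hmono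
    exact hmono
  -- ∫ Φ = 2 C
  have hPhiInt : ∫ s in (-h)..0, Φ s = 2 * C := by
    have h2C : 2 * C = ∫ p in dom L h, 2 * |v p * pdx v p| := (MeasureTheory.integral_const_mul 2 _).symm
    rw [intervalIntegral.integral_of_le hmh, integral_Ioc_eq_integral_Ioo, h2C, fub2 L h hqa]
    apply setIntegral_congr_fun measurableSet_Ioo
    intro s _
    exact integral_Ioc_eq_integral_Ioo
  -- Step 2 : integrate over x₀
  have step2 : L * G x ≤ (∫ x₀ in (0:ℝ)..L, G x₀) + L * (2 * C) := by
    have hmono2 : ∫ x₀ in (0:ℝ)..L, G x ≤ ∫ x₀ in (0:ℝ)..L, (G x₀ + 2 * C) := by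
      apply intervalIntegral.integral_mono_on hL.le
        (intervalIntegrable_const) ((hGcont.intervalIntegrable _ _).add intervalIntegrable_const)
      intro x₀ hx₀
      have := step1 x₀ hx₀
      rw [hPhiInt] at this
      exact this
    rw [intervalIntegral.integral_const, intervalIntegral.integral_add
      (hGcont.intervalIntegrable _ _) intervalIntegrable_const,
      intervalIntegral.integral_const] at hmono2
    simp only [smul_eq_mul, sub_zero] at hmono2
    linarith
  have hGint : ∫ x₀ in (0:ℝ)..L, G x₀ = ∫ p in dom L h, v p ^ 2 := by
    rw [fub1 L h hq, intervalIntegral.integral_of_le hL.le, integral_Ioc_eq_integral_Ioo]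
    apply setIntegral_congr_fun measurableSet_Ioo
    intro ξ _
    rw [hGdef]
    simp only
    rw [intervalIntegral.integral_of_le hmh, integral_Ioc_eq_integral_Ioo]
  rw [hGint] at step2
  have key : L * G x ≤ L * ((1 / L) * (∫ p in dom L h, v p ^ 2) + 2 * C) := by
    calc L * G x ≤ (∫ p in dom L h, v p ^ 2) + L * (2 * C) := step2
    _ = L * ((1 / L) * (∫ p in dom L h, v p ^ 2) + 2 * C) := by field_simp
  exact le_of_mul_le_mul_left key hL

lemma ubound {u : ℝ × ℝ → ℝ} (hu : ContDiff ℝ 1 u) {L h x z : ℝ} (hh : 0 < h)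
    (hbc : u (x, -h) = 0) (hz : z ∈ Icc (-h) 0) :
    u (x, z) ^ 2 ≤ h * ∫ s in (-h)..0, pdz u (x, s) ^ 2 := by
  have hcz : Continuous fun s => pdz u (x, s) :=
    (pdz_continuous hu).comp (continuous_const.prodMk continuous_id)
  have ftc : ∫ s in (-h)..z, pdz u (x, s) = u (x, z) - u (x, -h) := by
    apply intervalIntegral.integral_eq_sub_of_hasDerivAt
    · intro t _; exact hasDerivAt_snd hu x t
    · exact hcz.intervalIntegrable _ _
  rw [hbc, sub_zero] at ftc
  have h1 : u (x, z) ^ 2 ≤ (z - (-h)) * ∫ s in (-h)..z, pdz u (x, s) ^ 2 := by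
    rw [← ftc]; exact cs1d hcz (by linarith [hz.1])
  have h2 : ∫ s in (-h)..z, pdz u (x, s) ^ 2 ≤ ∫ s in (-h)..0, pdz u (x, s) ^ 2 := by
    apply intervalIntegral.integral_mono_interval le_rfl (by linarith [hz.1]) hz.2
    · exact Filter.Eventually.of_forall fun s => sq_nonneg _
    · exact (hcz.pow 2).intervalIntegrable _ _
  have h3 : 0 ≤ ∫ s in (-h)..z, pdz u (x, s) ^ 2 := by
    apply intervalIntegral.integral_nonneg (by linarith [hz.1])
    intro s _; exact sq_nonneg _
  nlinarith [hz.1, hz.2]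

lemma wbound {u : ℝ × ℝ → ℝ} (hu : ContDiff ℝ 2 u) {h x z : ℝ} (hh : 0 < h)
    (hz : z ∈ Icc (-h) 0) :
    (∫ s in z..(0:ℝ), pdx u (x, s)) ^ 2 ≤ h * ∫ s in (-h)..0, pdx u (x, s) ^ 2 := by
  have hcx : Continuous fun s => pdx u (x, s) :=
    (pdx_continuous (hu.of_le (by norm_num))).comp (continuous_const.prodMk continuous_id)
  have h1 : (∫ s in z..(0:ℝ), pdx u (x, s)) ^ 2 ≤ (0 - z) * ∫ s in z..(0:ℝ), pdx u (x, s) ^ 2 :=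
    cs1d hcx hz.2
  have h2 : ∫ s in z..(0:ℝ), pdx u (x, s) ^ 2 ≤ ∫ s in (-h)..0, pdx u (x, s) ^ 2 := by
    apply intervalIntegral.integral_mono_interval hz.1 hz.2 le_rfl
    · exact Filter.Eventually.of_forall fun s => sq_nonneg _
    · exact (hcx.pow 2).intervalIntegrable _ _
  have h3 : 0 ≤ ∫ s in z..(0:ℝ), pdx u (x, s) ^ 2 := by
    apply intervalIntegral.integral_nonneg hz.2
    intro s _; exact sq_nonneg _
  nlinarith [hz.1, hz.2]

lemma wOp_continuous {u : ℝ × ℝ → ℝ} (hu : ContDiff ℝ 2 u) : Continuous (wOp u) := by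
  have hux : Continuous (pdx u) := pdx_continuous (hu.of_le (by norm_num))
  have h1 : Continuous fun p : ℝ × ℝ => ∫ s in (0:ℝ)..p.2, pdx u (p.1, s) := by
    apply continuous_parametric_intervalIntegral_of_continuous
      (f := fun (p : ℝ × ℝ) t => pdx u (p.1, t)) ?_ continuous_snd
    exact hux.comp ((continuous_fst.comp continuous_fst).prodMk continuous_snd)
  have : Continuous fun p : ℝ × ℝ => -∫ s in (0:ℝ)..p.2, pdx u (p.1, s) := h1.neg
  convert this using 1
  ext p
  rw [wOp, intervalIntegral.integral_symm]


set_option maxHeartbeats 2000000 in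
theorem stmt11 (L h : ℝ) (hL : 0 < L) (hh : 0 < h) :
    ∃ c > 0, ∀ u : ℝ × ℝ → ℝ,
      ContDiff ℝ 2 u →
      (∀ z ∈ Icc (-h) (0:ℝ), u (0, z) = 0 ∧ u (L, z) = 0) →
      (∀ x ∈ Icc (0:ℝ) L, u (x, -h) = 0) →
      (∀ x ∈ Icc (0:ℝ) L, (∫ z in (-h)..(0:ℝ), u (x, z)) = 0) →
      l2 L h (fun p => u p * pdx u p + wOp u p * pdz u p) ^ 2 ≤
        c * h1n L h u ^ 3 * h2n L h u := by
  refine ⟨4 * h * (1 / L + 2), by positivity, ?_⟩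
  intro u hu _ hb _
  have hu1 : ContDiff ℝ 1 u := hu.of_le (by norm_num)
  have huc : Continuous u := hu.continuous
  have hux : Continuous (pdx u) := pdx_continuous hu1
  have huz : Continuous (pdz u) := pdz_continuous hu1
  have hzC1 : ContDiff ℝ 1 (pdz u) := pdz_contDiff hu
  have hxC1 : ContDiff ℝ 1 (pdx u) := pdx_contDiff hu
  have huxz : Continuous (pdx (pdz u)) := pdx_continuous hzC1
  have huxx : Continuous (pdx (pdx u)) := pdx_continuous hxC1
  have hw : Continuous (wOp u) := wOp_continuous hu
  set N1 := h1n L h u with hN1def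
  set N2 := h2n L h u with hN2def
  have hN1nn : 0 ≤ N1 := Real.sqrt_nonneg _
  have hN2nn : 0 ≤ N2 := Real.sqrt_nonneg _
  have hmono : ∀ a b : ℝ, 0 ≤ a → 0 ≤ b → a ^ 2 ≤ b ^ 2 → a ≤ b := by
    intro a b ha hb hab; nlinarith
  have hN1sq : N1 ^ 2 = l2 L h u ^ 2 + l2 L h (pdx u) ^ 2 + l2 L h (pdz u) ^ 2 := by
    rw [hN1def, h1n]; exact Real.sq_sqrt (by positivity)
  have hN2sq : N2 ^ 2 = N1 ^ 2 + l2 L h (pdx (pdx u)) ^ 2 + l2 L h (pdx (pdz u)) ^ 2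
      + l2 L h (pdz (pdz u)) ^ 2 := by
    rw [hN2def, h2n, ← hN1def]; exact Real.sq_sqrt (by positivity)
  have hx_le : l2 L h (pdx u) ≤ N1 :=
    hmono _ _ (l2_nonneg _ _ _) hN1nn
      (by nlinarith [sq_nonneg (l2 L h u), sq_nonneg (l2 L h (pdz u))])
  have hz_le : l2 L h (pdz u) ≤ N1 :=
    hmono _ _ (l2_nonneg _ _ _) hN1nn
      (by nlinarith [sq_nonneg (l2 L h u), sq_nonneg (l2 L h (pdx u))])
  have hN12 : N1 ≤ N2 :=
    hmono _ _ hN1nn hN2nn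
      (by nlinarith [sq_nonneg (l2 L h (pdx (pdx u))), sq_nonneg (l2 L h (pdx (pdz u))),
        sq_nonneg (l2 L h (pdz (pdz u)))])
  have hxz_le : l2 L h (pdx (pdz u)) ≤ N2 :=
    hmono _ _ (l2_nonneg _ _ _) hN2nn
      (by nlinarith [sq_nonneg N1, sq_nonneg (l2 L h (pdx (pdx u))),
        sq_nonneg (l2 L h (pdz (pdz u)))])
  have hxx_le : l2 L h (pdx (pdx u)) ≤ N2 :=
    hmono _ _ (l2_nonneg _ _ _) hN2nn
      (by nlinarith [sq_nonneg N1, sq_nonneg (l2 L h (pdx (pdz u))),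
        sq_nonneg (l2 L h (pdz (pdz u)))])
  set A : ℝ := h * (1 / L * N1 ^ 2 + 2 * (N1 * N2)) with hAdef
  have hAnn : 0 ≤ A := by positivity
  -- pointwise bound for u^2
  have hu_pt : ∀ p ∈ dom L h, u p ^ 2 ≤ A := by
    rintro ⟨x, z⟩ hp
    rw [dom, mem_prod] at hp
    obtain ⟨hpx, hpz⟩ := hp
    have hx : x ∈ Icc 0 L := Ioo_subset_Icc_self hpx
    have hz : z ∈ Icc (-h) 0 := Ioo_subset_Icc_self hpz
    have h1 : u (x, z) ^ 2 ≤ h * ∫ s in (-h)..0, pdz u (x, s) ^ 2 :=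
      ubound hu1 (L := L) hh (hb x hx) hz
    have h2 : ∫ s in (-h)..0, pdz u (x, s) ^ 2 ≤
        (1 / L) * (∫ p in dom L h, pdz u p ^ 2) +
          2 * ∫ p in dom L h, |pdz u p * pdx (pdz u) p| :=
      sliceBound L h hL hh hzC1 hx
    have h3 : ∫ p in dom L h, pdz u p ^ 2 ≤ N1 ^ 2 := by
      rw [← l2_sq]
      nlinarith [l2_nonneg L h (pdz u), hz_le]
    have h4 : ∫ p in dom L h, |pdz u p * pdx (pdz u) p| ≤ N1 * N2 := by
      calc _ ≤ l2 L h (pdz u) * l2 L h (pdx (pdz u)) := cs2d L h huz huxz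
      _ ≤ N1 * N2 := mul_le_mul hz_le hxz_le (l2_nonneg _ _ _) hN1nn
    calc u (x, z) ^ 2 ≤ h * ∫ s in (-h)..0, pdz u (x, s) ^ 2 := h1
    _ ≤ A := by
      rw [hAdef]
      apply mul_le_mul_of_nonneg_left _ hh.le
      calc _ ≤ _ := h2
      _ ≤ 1 / L * N1 ^ 2 + 2 * (N1 * N2) := by
        have hLpos : 0 < 1 / L := by positivity
        nlinarith
  -- pointwise bound for w^2
  have hw_pt : ∀ p ∈ dom L h, wOp u p ^ 2 ≤ A := by
    rintro ⟨x, z⟩ hp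
    rw [dom, mem_prod] at hp
    obtain ⟨hpx, hpz⟩ := hp
    have hx : x ∈ Icc 0 L := Ioo_subset_Icc_self hpx
    have hz : z ∈ Icc (-h) 0 := Ioo_subset_Icc_self hpz
    have h1 : wOp u (x, z) ^ 2 ≤ h * ∫ s in (-h)..0, pdx u (x, s) ^ 2 := wbound hu hh hz
    have h2 : ∫ s in (-h)..0, pdx u (x, s) ^ 2 ≤
        (1 / L) * (∫ p in dom L h, pdx u p ^ 2) +
          2 * ∫ p in dom L h, |pdx u p * pdx (pdx u) p| :=
      sliceBound L h hL hh hxC1 hx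
    have h3 : ∫ p in dom L h, pdx u p ^ 2 ≤ N1 ^ 2 := by
      rw [← l2_sq]
      nlinarith [l2_nonneg L h (pdx u), hx_le]
    have h4 : ∫ p in dom L h, |pdx u p * pdx (pdx u) p| ≤ N1 * N2 := by
      calc _ ≤ l2 L h (pdx u) * l2 L h (pdx (pdx u)) := cs2d L h hux huxx
      _ ≤ N1 * N2 := mul_le_mul hx_le hxx_le (l2_nonneg _ _ _) hN1nn
    calc wOp u (x, z) ^ 2 ≤ h * ∫ s in (-h)..0, pdx u (x, s) ^ 2 := h1
    _ ≤ A := by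
      rw [hAdef]
      apply mul_le_mul_of_nonneg_left _ hh.le
      calc _ ≤ _ := h2
      _ ≤ 1 / L * N1 ^ 2 + 2 * (N1 * N2) := by
        have hLpos : 0 < 1 / L := by positivity
        nlinarith
  -- integrate
  have hFcont : Continuous fun p => u p * pdx u p + wOp u p * pdz u p :=
    (huc.mul hux).add (hw.mul huz)
  have hRHScont : Continuous fun p : ℝ × ℝ => 2 * A * pdx u p ^ 2 + 2 * A * pdz u p ^ 2 :=
    (continuous_const.mul (hux.pow 2)).add (continuous_const.mul (huz.pow 2))
  have hint : l2 L h (fun p => u p * pdx u p + wOp u p * pdz u p) ^ 2 ≤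
      ∫ p in dom L h, (2 * A * pdx u p ^ 2 + 2 * A * pdz u p ^ 2) := by
    rw [l2_sq]
    apply setIntegral_mono_on (intOn_dom (hFcont.fun_pow 2)) (intOn_dom hRHScont)
      (measurableSet_Ioo.prod measurableSet_Ioo)
    intro p hp
    have h1 := hu_pt p hp
    have h2 := hw_pt p hp
    nlinarith [sq_nonneg (u p * pdx u p - wOp u p * pdz u p), sq_nonneg (pdx u p),
      sq_nonneg (pdz u p), sq_nonneg (u p), sq_nonneg (wOp u p),
      mul_le_mul_of_nonneg_right h1 (sq_nonneg (pdx u p)),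
      mul_le_mul_of_nonneg_right h2 (sq_nonneg (pdz u p)),
      sq_nonneg (u p * pdx u p), sq_nonneg (wOp u p * pdz u p)]
  have hsplit : ∫ p in dom L h, (2 * A * pdx u p ^ 2 + 2 * A * pdz u p ^ 2) =
      2 * A * (∫ p in dom L h, pdx u p ^ 2) + 2 * A * (∫ p in dom L h, pdz u p ^ 2) := by
    rw [integral_add (intOn_dom (continuous_const.fun_mul (hux.fun_pow 2)))
      (intOn_dom (continuous_const.fun_mul (huz.fun_pow 2))), MeasureTheory.integral_const_mul, MeasureTheory.integral_const_mul]
  have hxN : ∫ p in dom L h, pdx u p ^ 2 ≤ N1 ^ 2 := by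
    rw [← l2_sq]; nlinarith [l2_nonneg L h (pdx u), hx_le]
  have hzN : ∫ p in dom L h, pdz u p ^ 2 ≤ N1 ^ 2 := by
    rw [← l2_sq]; nlinarith [l2_nonneg L h (pdz u), hz_le]
  calc l2 L h (fun p => u p * pdx u p + wOp u p * pdz u p) ^ 2
      ≤ ∫ p in dom L h, (2 * A * pdx u p ^ 2 + 2 * A * pdz u p ^ 2) := hint
    _ = 2 * A * (∫ p in dom L h, pdx u p ^ 2) + 2 * A * (∫ p in dom L h, pdz u p ^ 2) := hsplit
    _ ≤ 2 * A * N1 ^ 2 + 2 * A * N1 ^ 2 := by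
        apply add_le_add <;> exact mul_le_mul_of_nonneg_left (by assumption) (by positivity)
    _ ≤ 4 * h * (1 / L + 2) * N1 ^ 3 * N2 := by
        rw [hAdef]
        have h1L : 0 < 1 / L := by positivity
        have key : N1 ^ 3 * N1 ≤ N1 ^ 3 * N2 :=
          mul_le_mul_of_nonneg_left hN12 (by positivity)
        nlinarith [mul_le_mul_of_nonneg_left key (mul_pos hh h1L).le]
end
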